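/- (Per-tier rounding gap bound, from the proof of Theorem 1.) Let x^R be an optimal solution of SYS-LP, fix a tier t with Σ_{j=1}^N x^R_{j,t} = M_t, and let S_t := {i : 0 < x^R_{i,t} < J_i and Σ_{s=1}^t x^R_{i,s} < J_i}. For each i let T^R_i := min{s ∈ {1,…,T} : Σ_{r=1}^s x^R_{i,r} ≥ J_i} (with T^R_i := T+1 and F_{i,T+1} := 0 if no such s exists). If F_{i,t} > F_{i,T^R_i} for every i ∈ S_t, then Σ_{i ∈ S_t} (F_{i,t} − F_{i,T^R_i}) x^R_{i,t} ≤ (|S_t| · max_i J_i / M_t) · Σ_{j=1}^N F_{j,t} x^R_{j,t}. -/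

import Mathlib

open Finset

/-- Feasibility for SYS-LP. -/
def LPFeasible (N T : ℕ) (J M : ℕ → ℝ) (x : ℕ → ℕ → ℝ) : Prop :=
  (∀ i t, 0 ≤ x i t) ∧
  (∀ i ∈ Finset.Icc 1 N, (∑ t ∈ Finset.Icc 1 T, x i t) ≤ J i) ∧
  (∀ t ∈ Finset.Icc 1 T, (∑ i ∈ Finset.Icc 1 N, x i t) ≤ M t)

/-- The SYS-LP objective `Σ_i Σ_t x_{i,t} F_{i,t}` with `F_{i,t} = U_{i,t}/J_i`. -/
noncomputable def LPObj (N T : ℕ) (J : ℕ → ℝ) (U : ℕ → ℕ → ℝ) (x : ℕ → ℕ → ℝ) : ℝ :=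
  ∑ i ∈ Finset.Icc 1 N, ∑ t ∈ Finset.Icc 1 T, x i t * (U i t / J i)

/- The completion tier `min {s ∈ {1,…,T} : Σ_{r=1}^s g r ≥ Ji}`, taken to be `T+1`
if no such tier exists. -/
open Classical in
noncomputable def compTier (T : ℕ) (Ji : ℝ) (g : ℕ → ℝ) : ℕ :=
  if ∃ t ∈ Finset.Icc 1 T, Ji ≤ ∑ s ∈ Finset.Icc 1 t, g s then
    sInf {t | t ∈ Finset.Icc 1 T ∧ Ji ≤ ∑ s ∈ Finset.Icc 1 t, g s}
  else T + 1

/-- `F_{i,s} = U_{i,s}/J_i` for `s ≤ T`, extended by `F_{i,T+1} = 0`. -/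
noncomputable def Fext (T : ℕ) (Ji : ℝ) (Ui : ℕ → ℝ) (s : ℕ) : ℝ :=
  if s ≤ T then Ui s / Ji else 0

lemma sum_two_diff {s : Finset ℕ} (f g : ℕ → ℝ) {a b : ℕ}
    (ha : a ∈ s) (hb : b ∈ s) (hab : a ≠ b)
    (hfg : ∀ k ∈ s, k ≠ a → k ≠ b → g k = f k) :
    ∑ k ∈ s, g k = (∑ k ∈ s, f k) + (g a - f a) + (g b - f b) := by
  have hsub : ({a, b} : Finset ℕ) ⊆ s := by
    intro k hk
    simp only [Finset.mem_insert, Finset.mem_singleton] at hk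
    rcases hk with rfl | rfl <;> assumption
  have h0 : ∀ k ∈ s, k ∉ ({a, b} : Finset ℕ) → g k - f k = 0 := by
    intro k hk hk2
    simp only [Finset.mem_insert, Finset.mem_singleton, not_or] at hk2
    rw [hfg k hk hk2.1 hk2.2]; ring
  have h1 := (Finset.sum_subset hsub h0).symm
  rw [Finset.sum_pair hab] at h1
  have h2 : ∑ k ∈ s, (g k - f k) = (∑ k ∈ s, g k) - ∑ k ∈ s, f k :=
    Finset.sum_sub_distrib g f
  rw [h2] at h1
  linarith

lemma sum_one_diff {s : Finset ℕ} (f g : ℕ → ℝ) {a : ℕ}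
    (ha : a ∈ s) (hfg : ∀ k ∈ s, k ≠ a → g k = f k) :
    ∑ k ∈ s, g k = (∑ k ∈ s, f k) + (g a - f a) := by
  have hsub : ({a} : Finset ℕ) ⊆ s := by
    intro k hk; simp only [Finset.mem_singleton] at hk; subst hk; exact ha
  have h0 : ∀ k ∈ s, k ∉ ({a} : Finset ℕ) → g k - f k = 0 := by
    intro k hk hk2
    simp only [Finset.mem_singleton] at hk2
    rw [hfg k hk hk2]; ring
  have h1 := (Finset.sum_subset hsub h0).symm
  rw [Finset.sum_singleton] at h1
  have h2 : ∑ k ∈ s, (g k - f k) = (∑ k ∈ s, g k) - ∑ k ∈ s, f k :=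
    Finset.sum_sub_distrib g f
  rw [h2] at h1
  linarith

/-- Exchange argument, four-point version. -/
lemma exch2 (N T : ℕ) (J M : ℕ → ℝ) (U : ℕ → ℕ → ℝ) (x : ℕ → ℕ → ℝ)
    (hfeas : LPFeasible N T J M x)
    (hopt : ∀ x', LPFeasible N T J M x' → LPObj N T J U x' ≤ LPObj N T J U x)
    (i j : ℕ) (hi : i ∈ Finset.Icc 1 N) (hj : j ∈ Finset.Icc 1 N) (hij : i ≠ j)
    (t s : ℕ) (ht : t ∈ Finset.Icc 1 T) (hs : s ∈ Finset.Icc 1 T) (hts : t ≠ s)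
    (hxjt : 0 < x j t) (hxis : 0 < x i s) :
    U i t / J i - U i s / J i ≤ U j t / J j - U j s / J j := by
  obtain ⟨hnn, hrow, hcol⟩ := hfeas
  set ε : ℝ := min (x j t) (x i s) with hεdef
  have hε : 0 < ε := lt_min hxjt hxis
  have hε1 : ε ≤ x j t := min_le_left _ _
  have hε2 : ε ≤ x i s := min_le_right _ _
  set x' : ℕ → ℕ → ℝ := fun a b =>
    if a = i then (if b = t then x i t + ε else if b = s then x i s - ε else x a b)
    else if a = j then (if b = t then x j t - ε else if b = s then x j s + ε else x a b)
    else x a b with hx'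
  have e_it : x' i t = x i t + ε := by simp [hx']
  have e_is : x' i s = x i s - ε := by simp [hx', Ne.symm hts]
  have e_jt : x' j t = x j t - ε := by simp [hx', Ne.symm hij]
  have e_js : x' j s = x j s + ε := by simp [hx', Ne.symm hij, Ne.symm hts]
  have e_i : ∀ b, b ≠ t → b ≠ s → x' i b = x i b := by
    intro b h1 h2; simp [hx', h1, h2]
  have e_j : ∀ b, b ≠ t → b ≠ s → x' j b = x j b := by
    intro b h1 h2; simp [hx', h1, h2, Ne.symm hij]
  have e_a : ∀ a, a ≠ i → a ≠ j → ∀ b, x' a b = x a b := by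
    intro a h1 h2 b; simp [hx', h1, h2]
  have hrow' : ∀ a, ∑ b ∈ Finset.Icc 1 T, x' a b = ∑ b ∈ Finset.Icc 1 T, x a b := by
    intro a
    by_cases hai : a = i
    · rw [hai, sum_two_diff (x i) (x' i) ht hs hts (fun k _ h1 h2 => e_i k h1 h2),
        e_it, e_is]
      ring
    by_cases haj : a = j
    · rw [haj, sum_two_diff (x j) (x' j) ht hs hts (fun k _ h1 h2 => e_j k h1 h2),
        e_jt, e_js]
      ring
    · exact Finset.sum_congr rfl fun b _ => e_a a hai haj b
  have hcol' : ∀ b, ∑ a ∈ Finset.Icc 1 N, x' a b = ∑ a ∈ Finset.Icc 1 N, x a b := by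
    intro b
    by_cases hbt : b = t
    · rw [hbt, sum_two_diff (fun a => x a t) (fun a => x' a t) hi hj hij
        (fun k _ h1 h2 => e_a k h1 h2 t), e_it, e_jt]
      ring
    by_cases hbs : b = s
    · rw [hbs, sum_two_diff (fun a => x a s) (fun a => x' a s) hi hj hij
        (fun k _ h1 h2 => e_a k h1 h2 s), e_is, e_js]
      ring
    · refine Finset.sum_congr rfl fun a _ => ?_
      by_cases hai : a = i
      · rw [hai, e_i b hbt hbs]
      by_cases haj : a = j
      · rw [haj, e_j b hbt hbs]
      · exact e_a a hai haj b
  have hfeas' : LPFeasible N T J M x' := by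
    refine ⟨?_, ?_, ?_⟩
    · intro a b
      by_cases hai : a = i
      · by_cases hbt : b = t
        · rw [hai, hbt, e_it]; have := hnn i t; linarith
        by_cases hbs : b = s
        · rw [hai, hbs, e_is]; linarith
        · rw [hai, e_i b hbt hbs]; exact hnn i b
      by_cases haj : a = j
      · by_cases hbt : b = t
        · rw [haj, hbt, e_jt]; linarith
        by_cases hbs : b = s
        · rw [haj, hbs, e_js]; have := hnn j s; linarith
        · rw [haj, e_j b hbt hbs]; exact hnn j b
      · rw [e_a a hai haj b]; exact hnn a b
    · intro a ha; rw [hrow' a]; exact hrow a ha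
    · intro b hb; rw [hcol' b]; exact hcol b hb
  have hobj : LPObj N T J U x' = LPObj N T J U x +
      ε * (U i t / J i - U i s / J i - U j t / J j + U j s / J j) := by
    unfold LPObj
    have hinner_i : ∑ b ∈ Finset.Icc 1 T, x' i b * (U i b / J i) =
        (∑ b ∈ Finset.Icc 1 T, x i b * (U i b / J i))
          + ε * (U i t / J i) - ε * (U i s / J i) := by
      rw [sum_two_diff (fun b => x i b * (U i b / J i)) (fun b => x' i b * (U i b / J i))
        ht hs hts (fun k _ h1 h2 => by simp only [e_i k h1 h2]), e_it, e_is]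
      ring
    have hinner_j : ∑ b ∈ Finset.Icc 1 T, x' j b * (U j b / J j) =
        (∑ b ∈ Finset.Icc 1 T, x j b * (U j b / J j))
          - ε * (U j t / J j) + ε * (U j s / J j) := by
      rw [sum_two_diff (fun b => x j b * (U j b / J j)) (fun b => x' j b * (U j b / J j))
        ht hs hts (fun k _ h1 h2 => by simp only [e_j k h1 h2]), e_jt, e_js]
      ring
    rw [sum_two_diff (fun a => ∑ b ∈ Finset.Icc 1 T, x a b * (U a b / J a))
      (fun a => ∑ b ∈ Finset.Icc 1 T, x' a b * (U a b / J a)) hi hj hij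
      (fun a _ h1 h2 => Finset.sum_congr rfl fun b _ => by rw [e_a a h1 h2 b])]
    rw [hinner_i, hinner_j]; ring
  have hle := hopt x' hfeas'
  rw [hobj] at hle
  have hD : U i t / J i - U i s / J i - U j t / J j + U j s / J j ≤ 0 := by
    by_contra h
    push_neg at h
    nlinarith
  linarith

/-- Exchange argument, two-point version. -/
lemma exch1 (N T : ℕ) (J M : ℕ → ℝ) (U : ℕ → ℕ → ℝ) (x : ℕ → ℕ → ℝ)
    (hfeas : LPFeasible N T J M x)
    (hopt : ∀ x', LPFeasible N T J M x' → LPObj N T J U x' ≤ LPObj N T J U x)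
    (i j : ℕ) (hi : i ∈ Finset.Icc 1 N) (hj : j ∈ Finset.Icc 1 N) (hij : i ≠ j)
    (t : ℕ) (ht : t ∈ Finset.Icc 1 T)
    (hxjt : 0 < x j t) (hri : ∑ b ∈ Finset.Icc 1 T, x i b < J i) :
    U i t / J i ≤ U j t / J j := by
  obtain ⟨hnn, hrow, hcol⟩ := hfeas
  set ε : ℝ := min (x j t) (J i - ∑ b ∈ Finset.Icc 1 T, x i b) with hεdef
  have hε : 0 < ε := lt_min hxjt (by linarith)
  have hε1 : ε ≤ x j t := min_le_left _ _
  have hε2 : ε ≤ J i - ∑ b ∈ Finset.Icc 1 T, x i b := min_le_right _ _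
  set x' : ℕ → ℕ → ℝ := fun a b =>
    if a = i then (if b = t then x i t + ε else x a b)
    else if a = j then (if b = t then x j t - ε else x a b)
    else x a b with hx'
  have e_it : x' i t = x i t + ε := by simp [hx']
  have e_jt : x' j t = x j t - ε := by simp [hx', Ne.symm hij]
  have e_i : ∀ b, b ≠ t → x' i b = x i b := by intro b h1; simp [hx', h1]
  have e_j : ∀ b, b ≠ t → x' j b = x j b := by intro b h1; simp [hx', h1, Ne.symm hij]
  have e_a : ∀ a, a ≠ i → a ≠ j → ∀ b, x' a b = x a b := by
    intro a h1 h2 b; simp [hx', h1, h2]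
  have hfeas' : LPFeasible N T J M x' := by
    refine ⟨?_, ?_, ?_⟩
    · intro a b
      by_cases hai : a = i
      · by_cases hbt : b = t
        · rw [hai, hbt, e_it]; have := hnn i t; linarith
        · rw [hai, e_i b hbt]; exact hnn i b
      by_cases haj : a = j
      · by_cases hbt : b = t
        · rw [haj, hbt, e_jt]; linarith
        · rw [haj, e_j b hbt]; exact hnn j b
      · rw [e_a a hai haj b]; exact hnn a b
    · intro a ha
      by_cases hai : a = i
      · rw [hai, sum_one_diff (x i) (x' i) ht (fun k _ h1 => e_i k h1), e_it]
        have := hrow i (hai ▸ ha)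
        linarith
      by_cases haj : a = j
      · rw [haj, sum_one_diff (x j) (x' j) ht (fun k _ h1 => e_j k h1), e_jt]
        have := hrow j (haj ▸ ha)
        linarith
      · rw [Finset.sum_congr rfl fun b _ => e_a a hai haj b]; exact hrow a ha
    · intro b hb
      by_cases hbt : b = t
      · rw [hbt, sum_two_diff (fun a => x a t) (fun a => x' a t) hi hj hij
          (fun k _ h1 h2 => e_a k h1 h2 t), e_it, e_jt]
        have := hcol t (hbt ▸ hb)
        linarith
      · rw [Finset.sum_congr rfl fun a _ => (by
          by_cases hai : a = i
          · rw [hai, e_i b hbt]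
          by_cases haj : a = j
          · rw [haj, e_j b hbt]
          · exact e_a a hai haj b : x' a b = x a b)]
        exact hcol b hb
  have hobj : LPObj N T J U x' = LPObj N T J U x + ε * (U i t / J i - U j t / J j) := by
    unfold LPObj
    have hinner_i : ∑ b ∈ Finset.Icc 1 T, x' i b * (U i b / J i) =
        (∑ b ∈ Finset.Icc 1 T, x i b * (U i b / J i)) + ε * (U i t / J i) := by
      rw [sum_one_diff (fun b => x i b * (U i b / J i)) (fun b => x' i b * (U i b / J i))
        ht (fun k _ h1 => by simp only [e_i k h1]), e_it]
      ring
    have hinner_j : ∑ b ∈ Finset.Icc 1 T, x' j b * (U j b / J j) =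
        (∑ b ∈ Finset.Icc 1 T, x j b * (U j b / J j)) - ε * (U j t / J j) := by
      rw [sum_one_diff (fun b => x j b * (U j b / J j)) (fun b => x' j b * (U j b / J j))
        ht (fun k _ h1 => by simp only [e_j k h1]), e_jt]
      ring
    rw [sum_two_diff (fun a => ∑ b ∈ Finset.Icc 1 T, x a b * (U a b / J a))
      (fun a => ∑ b ∈ Finset.Icc 1 T, x' a b * (U a b / J a)) hi hj hij
      (fun a _ h1 h2 => Finset.sum_congr rfl fun b _ => by rw [e_a a h1 h2 b])]
    rw [hinner_i, hinner_j]; ring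
  have hle := hopt x' hfeas'
  rw [hobj] at hle
  have hD : U i t / J i - U j t / J j ≤ 0 := by
    by_contra h
    push_neg at h
    nlinarith
  linarith

open Classical in
/-- per-tier rounding gap bound, from the proof of Theorem 1:
for an optimal SYS-LP solution `x^R`, a fully used tier `t` and
`S_t = {i : 0 < x^R_{i,t} < J_i and Σ_{s=1}^t x^R_{i,s} < J_i}`, if
`F_{i,t} > F_{i,T^R_i}` for every `i ∈ S_t`, then
`Σ_{i ∈ S_t} (F_{i,t} − F_{i,T^R_i}) x^R_{i,t}
  ≤ (|S_t|·max_i J_i / M_t)·Σ_j F_{j,t} x^R_{j,t}`. -/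
theorem stmt18
    (N T : ℕ) (hN : 1 ≤ N) (J M : ℕ → ℝ) (U : ℕ → ℕ → ℝ)
    (hJ : ∀ i ∈ Finset.Icc 1 N, 0 < J i)
    (hM : ∀ t ∈ Finset.Icc 1 T, 0 < M t)
    (hUnn : ∀ i ∈ Finset.Icc 1 N, ∀ t ∈ Finset.Icc 1 T, 0 ≤ U i t)
    (hUmono : ∀ i ∈ Finset.Icc 1 N, ∀ t ∈ Finset.Icc 1 T, ∀ t', t ≤ t' → t' ≤ T →
      U i t' ≤ U i t)
    (x : ℕ → ℕ → ℝ)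
    (hfeas : LPFeasible N T J M x)
    (hopt : ∀ x', LPFeasible N T J M x' → LPObj N T J U x' ≤ LPObj N T J U x)
    (t : ℕ) (ht : t ∈ Finset.Icc 1 T)
    (hfull : (∑ j ∈ Finset.Icc 1 N, x j t) = M t)
    (hgap : ∀ i ∈ (Finset.Icc 1 N).filter
        (fun i => 0 < x i t ∧ x i t < J i ∧ (∑ s ∈ Finset.Icc 1 t, x i s) < J i),
      Fext T (J i) (U i) (compTier T (J i) (x i)) < Fext T (J i) (U i) t) :
    ∑ i ∈ (Finset.Icc 1 N).filter
        (fun i => 0 < x i t ∧ x i t < J i ∧ (∑ s ∈ Finset.Icc 1 t, x i s) < J i),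
      (Fext T (J i) (U i) t - Fext T (J i) (U i) (compTier T (J i) (x i))) * x i t
    ≤ ((((Finset.Icc 1 N).filter
          (fun i => 0 < x i t ∧ x i t < J i ∧
            (∑ s ∈ Finset.Icc 1 t, x i s) < J i)).card : ℝ) *
        ((Finset.Icc 1 N).sup' (Finset.nonempty_Icc.mpr hN) J) / M t) *
      ∑ j ∈ Finset.Icc 1 N, Fext T (J j) (U j) t * x j t := by
  have ht1 : 1 ≤ t := (Finset.mem_Icc.mp ht).1
  have htT : t ≤ T := (Finset.mem_Icc.mp ht).2
  have hFt : ∀ (Ji : ℝ) (Ui : ℕ → ℝ), Fext T Ji Ui t = Ui t / Ji := fun Ji Ui => if_pos htT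
  have hMt : 0 < M t := hM t ht
  set S := (Finset.Icc 1 N).filter
      (fun i => 0 < x i t ∧ x i t < J i ∧ (∑ s ∈ Finset.Icc 1 t, x i s) < J i) with hS
  set Jm := (Finset.Icc 1 N).sup' (Finset.nonempty_Icc.mpr hN) J with hJm
  set Sig := ∑ j ∈ Finset.Icc 1 N, Fext T (J j) (U j) t * x j t with hSig
  have hSigNN : (0:ℝ) ≤ Sig := by
    rw [hSig]
    refine Finset.sum_nonneg fun j hj => mul_nonneg ?_ (hfeas.1 j t)
    rw [hFt]
    exact div_nonneg (hUnn j hj t ht) (hJ j hj).le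
  have hFext_nonneg : ∀ i ∈ Finset.Icc 1 N,
      0 ≤ Fext T (J i) (U i) (compTier T (J i) (x i)) := by
    intro i hiN
    by_cases hP : ∃ s ∈ Finset.Icc 1 T, J i ≤ ∑ r ∈ Finset.Icc 1 s, x i r
    · have hcdef : compTier T (J i) (x i) =
          sInf {s | s ∈ Finset.Icc 1 T ∧ J i ≤ ∑ r ∈ Finset.Icc 1 s, x i r} := by
        unfold compTier; rw [if_pos hP]
      have hcmem : compTier T (J i) (x i) ∈
          {s | s ∈ Finset.Icc 1 T ∧ J i ≤ ∑ r ∈ Finset.Icc 1 s, x i r} := by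
        rw [hcdef]
        exact Nat.sInf_mem (by obtain ⟨s, h1, h2⟩ := hP; exact ⟨s, h1, h2⟩)
      obtain ⟨hcT, _⟩ := hcmem
      unfold Fext
      rw [if_pos (Finset.mem_Icc.mp hcT).2]
      exact div_nonneg (hUnn i hiN _ hcT) (hJ i hiN).le
    · have hceq : compTier T (J i) (x i) = T + 1 := by
        unfold compTier; rw [if_neg hP]
      rw [hceq]
      unfold Fext
      rw [if_neg (by omega)]
  -- the key pointwise inequality, via the exchange argument
  have key : ∀ i ∈ S, ∀ j ∈ Finset.Icc 1 N, 0 < x j t →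
      Fext T (J i) (U i) t - Fext T (J i) (U i) (compTier T (J i) (x i))
        ≤ Fext T (J j) (U j) t := by
    intro i hiS j hjN hxjt
    have hiN : i ∈ Finset.Icc 1 N := (Finset.mem_filter.mp hiS).1
    obtain ⟨hxit, hxitJ, hpart⟩ := (Finset.mem_filter.mp hiS).2
    by_cases hji : j = i
    · have := hFext_nonneg i hiN
      rw [hji]
      linarith
    have hij : i ≠ j := fun h => hji h.symm
    rw [hFt (J i) (U i), hFt (J j) (U j)]
    by_cases hP : ∃ s ∈ Finset.Icc 1 T, J i ≤ ∑ r ∈ Finset.Icc 1 s, x i r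
    · set c := compTier T (J i) (x i) with hc
      have hcdef : c = sInf {s | s ∈ Finset.Icc 1 T ∧ J i ≤ ∑ r ∈ Finset.Icc 1 s, x i r} := by
        rw [hc]; unfold compTier; rw [if_pos hP]
      have hcmem : c ∈ {s | s ∈ Finset.Icc 1 T ∧ J i ≤ ∑ r ∈ Finset.Icc 1 s, x i r} := by
        rw [hcdef]
        exact Nat.sInf_mem (by obtain ⟨s, h1, h2⟩ := hP; exact ⟨s, h1, h2⟩)
      obtain ⟨hcT, hcge⟩ := hcmem
      have hcT' := Finset.mem_Icc.mp hcT
      have hmono : (∑ r ∈ Finset.Icc 1 c, x i r) ≤ ∑ r ∈ Finset.Icc 1 t, x i r → False := by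
        intro hcontra
        linarith
      have htc : t < c := by
        by_contra h
        push_neg at h
        exact hmono (Finset.sum_le_sum_of_subset_of_nonneg
          (Finset.Icc_subset_Icc_right h) (fun k _ _ => hfeas.1 i k))
      have hprevmem : c - 1 ∉ {s | s ∈ Finset.Icc 1 T ∧ J i ≤ ∑ r ∈ Finset.Icc 1 s, x i r} := by
        rw [hcdef]
        exact Nat.notMem_of_lt_sInf (by rw [← hcdef]; omega)
      have hprev : (∑ r ∈ Finset.Icc 1 (c-1), x i r) < J i := by
        by_contra h
        push_neg at h
        exact hprevmem ⟨Finset.mem_Icc.mpr ⟨by omega, by omega⟩, h⟩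
      have hsplit := Finset.sum_Icc_succ_top (show 1 ≤ c - 1 + 1 by omega) (x i)
      have hcc : c - 1 + 1 = c := by omega
      rw [hcc] at hsplit
      have hxic : 0 < x i c := by
        rw [hsplit] at hcge
        linarith
      have hex := exch2 N T J M U x hfeas hopt i j hiN hjN hij t c ht hcT
        (by omega) hxjt hxic
      have hFc : Fext T (J i) (U i) c = U i c / J i := by
        unfold Fext; rw [if_pos hcT'.2]
      have hUjc : 0 ≤ U j c / J j := div_nonneg (hUnn j hjN c hcT) (hJ j hjN).le
      rw [hFc]
      linarith
    · have hceq : compTier T (J i) (x i) = T + 1 := by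
        unfold compTier; rw [if_neg hP]
      have hF0 : Fext T (J i) (U i) (T + 1) = 0 := by
        unfold Fext; rw [if_neg (by omega)]
      push_neg at hP
      have hri : (∑ b ∈ Finset.Icc 1 T, x i b) < J i :=
        hP T (Finset.mem_Icc.mpr ⟨le_trans ht1 htT, le_refl T⟩)
      have hex := exch1 N T J M U x hfeas hopt i j hiN hjN hij t ht hxjt hri
      rw [hceq, hF0]
      linarith
  -- each gap is at most Sig / M t
  have step3 : ∀ i ∈ S,
      (Fext T (J i) (U i) t - Fext T (J i) (U i) (compTier T (J i) (x i))) * M t ≤ Sig := by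
    intro i hiS
    have : (Fext T (J i) (U i) t - Fext T (J i) (U i) (compTier T (J i) (x i))) * M t =
        ∑ j ∈ Finset.Icc 1 N,
          (Fext T (J i) (U i) t - Fext T (J i) (U i) (compTier T (J i) (x i))) * x j t := by
      rw [← Finset.mul_sum, hfull]
    rw [this, hSig]
    refine Finset.sum_le_sum fun j hj => ?_
    rcases (hfeas.1 j t).eq_or_lt with h | h
    · rw [← h]; simp
    · exact mul_le_mul_of_nonneg_right (key i hiS j hj h) (hfeas.1 j t)
  have hstep4 : ∀ i ∈ S,
      (Fext T (J i) (U i) t - Fext T (J i) (U i) (compTier T (J i) (x i))) * x i t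
        ≤ Sig / M t * Jm := by
    intro i hiS
    have hiN : i ∈ Finset.Icc 1 N := (Finset.mem_filter.mp hiS).1
    obtain ⟨hxit, hxitJ, hpart⟩ := (Finset.mem_filter.mp hiS).2
    have hgi : 0 < Fext T (J i) (U i) t - Fext T (J i) (U i) (compTier T (J i) (x i)) := by
      have := hgap i hiS
      linarith
    have hJmi : J i ≤ Jm := Finset.le_sup' J hiN
    have hJm0 : 0 ≤ Jm := le_trans (hJ i hiN).le hJmi
    have h1 : Fext T (J i) (U i) t - Fext T (J i) (U i) (compTier T (J i) (x i)) ≤ Sig / M t :=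
      (le_div_iff₀ hMt).mpr (step3 i hiS)
    have hx : x i t ≤ Jm := le_trans hxitJ.le hJmi
    calc (Fext T (J i) (U i) t - Fext T (J i) (U i) (compTier T (J i) (x i))) * x i t
        ≤ (Fext T (J i) (U i) t - Fext T (J i) (U i) (compTier T (J i) (x i))) * Jm :=
          mul_le_mul_of_nonneg_left hx hgi.le
      _ ≤ Sig / M t * Jm := mul_le_mul_of_nonneg_right h1 hJm0
  calc ∑ i ∈ S, (Fext T (J i) (U i) t - Fext T (J i) (U i) (compTier T (J i) (x i))) * x i t
      ≤ ∑ _i ∈ S, Sig / M t * Jm := Finset.sum_le_sum hstep4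
    _ = (S.card : ℝ) * (Sig / M t * Jm) := by rw [Finset.sum_const, nsmul_eq_mul]
    _ = ((S.card : ℝ) * Jm / M t) * Sig := by ring
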